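/- Let n₀ be a positive integer and let H be a finite set of graphs such that no n-array is H-free for any n ≥ n₀. Let c = max(n₀, ΣH |V(H)|). Then for every c-tassel T there exists a graph H ∈ H such that every component of H is isomorphic to an induced subgraph of T; that is, H is tasselled with constant c. -/

import Mathlib

def IsPathList {V : Type} (G : SimpleGraph V) (l : List V) : Prop :=
  l ≠ [] ∧ l.Nodup ∧ ∀ i j : Fin l.length,
    (G.Adj (l.get i) (l.get j) ↔ (i.1 + 1 = j.1 ∨ j.1 + 1 = i.1))

def ContainsInduced {V W : Type} (G : SimpleGraph V) (H : SimpleGraph W) : Prop :=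
  ∃ f : W → V, Function.Injective f ∧ ∀ a b : W, H.Adj a b ↔ G.Adj (f a) (f b)

def IsNArray {V : Type} (G : SimpleGraph V) (n : ℕ) : Prop :=
  ∃ (L : Fin n → List V) (x : Fin n → V),
    (∀ i, IsPathList G (L i)) ∧
    (∀ i j, i ≠ j → ∀ u ∈ L i, ∀ v ∈ L j, u ≠ v ∧ ¬ G.Adj u v) ∧
    Function.Injective x ∧
    (∀ i j, ¬ G.Adj (x i) (x j)) ∧
    (∀ i j, x i ∉ L j) ∧
    (∀ v : V, (∃ i, v ∈ L i) ∨ (∃ i, v = x i)) ∧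
    (∀ i j, ∃ v ∈ L i, G.Adj (x j) v) ∧
    (∀ i : Fin n, ∀ j : ℕ, ∀ hj : j + 1 < n,
      ∀ a b : Fin (L i).length,
        G.Adj (x ⟨j, by omega⟩) ((L i).get a) →
        G.Adj (x ⟨j + 1, hj⟩) ((L i).get b) → (a : ℕ) < (b : ℕ))

def IsTasselGraph {V : Type} (G : SimpleGraph V) (c : ℕ) : Prop :=
  ∃ (x : V) (m n : ℕ) (A : Finset ℕ) (P : Fin m → List V),
    c ≤ m ∧ A.Nonempty ∧ (∀ i ∈ A, c ≤ i ∧ i + c < n) ∧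
    (∀ j, (P j).length = n ∧ IsPathList G (P j) ∧ x ∉ P j) ∧
    (∀ j j', j ≠ j' → ∀ u ∈ P j, ∀ v ∈ P j', u ≠ v ∧ ¬ G.Adj u v) ∧
    (∀ j, ∀ i : Fin (P j).length, G.Adj x ((P j).get i) ↔ (i : ℕ) ∈ A) ∧
    (∀ v : V, v = x ∨ ∃ j, v ∈ P j)

section Aux

/-- The relation underlying the array graph. -/
def AGrel (N L : ℕ) (A : Finset ℕ) :
    (Fin N ⊕ (Fin N × Fin (N * L))) → (Fin N ⊕ (Fin N × Fin (N * L))) → Prop :=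
  fun u v => match u, v with
  | .inl j, .inr (_, k) => (k : ℕ) / L = (j : ℕ) ∧ (k : ℕ) % L ∈ A
  | .inr (i, k), .inr (i', k') => i = i' ∧ (k : ℕ) + 1 = (k' : ℕ)
  | _, _ => False

/-- The array graph: `N` paths, each consisting of `N` consecutive blocks of
length `L`, and `N` necks, the `j`-th adjacent to positions `A` of block `j`
in every path. -/
def AG (N L : ℕ) (A : Finset ℕ) : SimpleGraph (Fin N ⊕ (Fin N × Fin (N * L))) :=
  SimpleGraph.fromRel (AGrel N L A)

lemma AG_adj_ll (N L : ℕ) (A : Finset ℕ) (j j' : Fin N) :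
    ¬ (AG N L A).Adj (.inl j) (.inl j') := by
  simp [AG, AGrel, SimpleGraph.fromRel_adj]

lemma AG_adj_lr (N L : ℕ) (A : Finset ℕ) (j : Fin N) (i : Fin N) (k : Fin (N * L)) :
    (AG N L A).Adj (.inl j) (.inr (i, k)) ↔ ((k : ℕ) / L = (j : ℕ) ∧ (k : ℕ) % L ∈ A) := by
  simp [AG, AGrel, SimpleGraph.fromRel_adj]

lemma AG_adj_rl (N L : ℕ) (A : Finset ℕ) (j : Fin N) (i : Fin N) (k : Fin (N * L)) :
    (AG N L A).Adj (.inr (i, k)) (.inl j) ↔ ((k : ℕ) / L = (j : ℕ) ∧ (k : ℕ) % L ∈ A) := by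
  rw [SimpleGraph.adj_comm]; exact AG_adj_lr N L A j i k

lemma AG_adj_rr (N L : ℕ) (A : Finset ℕ) (i i' : Fin N) (k k' : Fin (N * L)) :
    (AG N L A).Adj (.inr (i, k)) (.inr (i', k')) ↔
      (i = i' ∧ ((k : ℕ) + 1 = (k' : ℕ) ∨ (k' : ℕ) + 1 = (k : ℕ))) := by
  simp only [AG, AGrel, SimpleGraph.fromRel_adj]
  constructor
  · rintro ⟨hne, h | h⟩
    · exact ⟨h.1, Or.inl h.2⟩
    · exact ⟨h.1.symm, Or.inr h.2⟩
  · rintro ⟨rfl, h | h⟩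
    · exact ⟨by simp [Fin.ext_iff]; omega, Or.inl ⟨rfl, h⟩⟩
    · exact ⟨by simp [Fin.ext_iff]; omega, Or.inr ⟨rfl, h⟩⟩

lemma AG_isNArray (N L : ℕ) (hN : 0 < N) (hL : 0 < L) (A : Finset ℕ)
    (a₀ : ℕ) (ha₀ : a₀ ∈ A) (ha₀L : a₀ < L) :
    IsNArray (AG N L A) N := by
  refine ⟨fun i => List.ofFn (fun k : Fin (N * L) => .inr (i, k)), fun j => .inl j,
    ?_, ?_, ?_, ?_, ?_, ?_, ?_, ?_⟩
  · intro i
    refine ⟨?_, ?_, ?_⟩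
    · simp only [ne_eq, List.ofFn_eq_nil_iff]
      exact Nat.mul_ne_zero hN.ne' hL.ne'
    · exact List.nodup_ofFn.mpr (fun a b h => by simpa using h)
    · intro a b
      simp only [List.get_ofFn, AG_adj_rr, Fin.coe_cast]
      constructor
      · rintro ⟨-, h⟩; exact h
      · intro h; exact ⟨by trivial, h⟩
  · intro i j hij u hu v hv
    simp only [List.mem_ofFn] at hu hv
    obtain ⟨ku, rfl⟩ := hu; obtain ⟨kv, rfl⟩ := hv
    constructor
    · simp [hij]
    · rw [AG_adj_rr]; rintro ⟨rfl, -⟩; exact hij rfl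
  · intro a b h; simpa using h
  · intro i j; exact AG_adj_ll N L A i j
  · intro i j; simp [List.mem_ofFn]
  · intro v
    match v with
    | .inl j => exact Or.inr ⟨j, rfl⟩
    | .inr (i, k) => exact Or.inl ⟨i, by simp [List.mem_ofFn]⟩
  · intro i j
    have hk : (j : ℕ) * L + a₀ < N * L := by
      have : (j : ℕ) + 1 ≤ N := j.2
      calc (j : ℕ) * L + a₀ < (j : ℕ) * L + L := by omega
        _ = ((j : ℕ) + 1) * L := by ring
        _ ≤ N * L := Nat.mul_le_mul_right L this
    refine ⟨.inr (i, ⟨(j : ℕ) * L + a₀, hk⟩), by simp [List.mem_ofFn], ?_⟩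
    rw [AG_adj_lr]
    constructor
    · simp only []
      rw [Nat.add_div_of_dvd_right ⟨(j:ℕ), mul_comm _ _⟩, Nat.mul_div_cancel _ hL, Nat.div_eq_of_lt ha₀L]
      omega
    · simp only []
      rw [Nat.add_mod, Nat.mul_mod_left, Nat.zero_add, Nat.mod_mod_of_dvd, Nat.mod_eq_of_lt ha₀L]
      exact ha₀
      exact dvd_refl L
  · intro i j hj a b hadj hbdj
    simp only [List.get_ofFn] at hadj hbdj
    rw [AG_adj_lr] at hadj hbdj
    have h1 := hadj.1
    have h2 := hbdj.1
    have ha' : ((a : ℕ)) / L = j := by simpa using h1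
    have hb' : ((b : ℕ)) / L = j + 1 := by simpa using h2
    have : (a : ℕ) / L < (b : ℕ) / L := by omega
    exact Nat.lt_of_div_lt_div this

lemma flipLemma {W : Type} (G : SimpleGraph W) (Q : W → Prop) :
    ∀ {u v : W}, G.Walk u v → Q u → ¬ Q v →
    ∃ a b, G.Adj a b ∧ G.Reachable u a ∧ G.Reachable u b ∧ Q a ∧ ¬ Q b := by
  intro u v p
  induction p with
  | nil => intro h1 h2; exact absurd h1 h2
  | @cons u b v h p ih =>
    intro hu hv
    by_cases hq : Q b
    · obtain ⟨a', b', hadj, hra, hrb, hqa, hqb⟩ := ih hq hv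
      exact ⟨a', b', hadj, (h.reachable).trans hra, (h.reachable).trans hrb, hqa, hqb⟩
    · exact ⟨u, b, h, SimpleGraph.Reachable.refl u, h.reachable, hu, hq⟩

lemma card_le_of_rel {W : Type} [Fintype W] (F : Finset ℕ) (ψ : ℕ → W → Prop)
    (h : ∀ t ∈ F, ∃ v, ψ t v)
    (hdisj : ∀ t ∈ F, ∀ t' ∈ F, ∀ v, ψ t v → ψ t' v → t = t') :
    F.card ≤ Fintype.card W := by
  classical
  rcases F.eq_empty_or_nonempty with rfl | ⟨t₀, ht₀⟩
  · simp
  have hW : Nonempty W := ⟨(h t₀ ht₀).choose⟩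
  set σ : ℕ → W := fun t => if h' : ∃ v, ψ t v then h'.choose else Classical.arbitrary W
    with hσdef
  have hσ : ∀ t ∈ F, ψ t (σ t) := by
    intro t ht
    simp only [hσdef]
    rw [dif_pos (h t ht)]
    exact (h t ht).choose_spec
  have hinj : Set.InjOn σ ↑F := by
    intro t ht t' ht' he
    exact hdisj t ht t' ht' _ (hσ t ht) (he ▸ hσ t' ht')
  have := Finset.card_le_card_of_injOn σ (fun a _ => Finset.mem_univ _) hinj
  simpa using this

lemma div_block {n j k : ℕ} (hn : 0 < n) (h1 : j * n ≤ k) (h2 : k < j * n + n) :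
    k / n = j ∧ k % n = k - j * n := by
  have hc : n * j = j * n := mul_comm n j
  have hk : k = n * j + (k - j * n) := by omega
  constructor
  · rw [hk, Nat.mul_add_div hn, Nat.div_eq_of_lt (by omega)]
    omega
  · rw [hk, Nat.mul_add_mod, Nat.mod_eq_of_lt (by omega)]
    omega

end Aux

theorem stmt10 (n₀ : ℕ) (hn₀ : 0 < n₀)
    (ι : Type) [Fintype ι] (Wt : ι → Type) [∀ i, Fintype (Wt i)]
    (H : ∀ i, SimpleGraph (Wt i))
    (hfree : ∀ n, n₀ ≤ n → ∀ (V : Type) (A : SimpleGraph V), IsNArray A n →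
      ∃ i, ContainsInduced A (H i)) :
    ∀ (V : Type) (T : SimpleGraph V),
      IsTasselGraph T (max n₀ (∑ i, Fintype.card (Wt i))) →
      ∃ i, ∀ w : Wt i,
        ContainsInduced T ((H i).induce {v | (H i).Reachable v w}) := by
  classical
  intro V T hT
  obtain ⟨x, m, n, A, P, hcm, hAne, hAr, hP, hPP, hPx, hcov⟩ := hT
  set c := max n₀ (∑ i, Fintype.card (Wt i)) with hcdef
  obtain ⟨a₀, ha₀⟩ := hAne
  obtain ⟨hca₀, ha₀c⟩ := hAr a₀ ha₀
  have hn₀c : n₀ ≤ c := le_max_left _ _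
  have hc1 : 1 ≤ c := le_trans hn₀ hn₀c
  have hn0 : 0 < n := by omega
  have ha₀n : a₀ < n := by omega
  have h2cn : 2 * c < n := by omega
  have hn₀m : n₀ ≤ m := le_trans hn₀c hcm
  obtain ⟨i, f, hfinj, hfadj⟩ :=
    hfree n₀ le_rfl _ (AG n₀ n A) (AG_isNArray n₀ n hn₀ hn0 A a₀ ha₀ ha₀n)
  refine ⟨i, ?_⟩
  intro w
  have hcard : Fintype.card (Wt i) ≤ c :=
    le_max_of_le_right (Finset.single_le_sum
      (f := fun i => Fintype.card (Wt i)) (fun i _ => Nat.zero_le _) (Finset.mem_univ i))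
  set C : Set (Wt i) := {v | (H i).Reachable v w} with hCdef
  have hwC : w ∈ C := SimpleGraph.Reachable.refl w
  have key : ∀ Q : (Fin n₀ ⊕ (Fin n₀ × Fin (n₀ * n))) → Prop, ∀ u ∈ C, ∀ v ∈ C,
      Q (f u) → ¬ Q (f v) →
      ∃ a b, a ∈ C ∧ b ∈ C ∧ (AG n₀ n A).Adj (f a) (f b) ∧ Q (f a) ∧ ¬ Q (f b) := by
    intro Q u hu v hv hQu hQv
    obtain ⟨p⟩ := ((hu.trans hv.symm : (H i).Reachable u v))
    obtain ⟨a, b, hadj, hra, hrb, hQa, hQb⟩ := flipLemma (H i) (fun z => Q (f z)) p hQu hQv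
    exact ⟨a, b, hra.symm.trans hu, hrb.symm.trans hu, (hfadj a b).mp hadj, hQa, hQb⟩
  set inS : Fin n₀ → ℕ → Prop :=
    fun ip t => ∃ v ∈ C, ∃ ht : t < n₀ * n, f v = .inr (ip, ⟨t, ht⟩) with hinSdef
  have hget : ∀ (q : ℕ) (jm : Fin m), q % n < (P jm).length := by
    intro q jm; rw [(hP jm).1]; exact Nat.mod_lt _ hn0
  by_cases hneck : ∃ v₀ ∈ C, ∃ j, f v₀ = .inl j
  · obtain ⟨v₀, hv₀C, j, hfv₀⟩ := hneck
    have claimA0 : ∀ u ∈ C, ∀ v ∈ C, ∀ (j₁ j₂ : Fin n₀), f u = .inl j₁ → f v = .inl j₂ →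
        (j₁ : ℕ) < (j₂ : ℕ) → False := by
      intro u hu v hv j₁ j₂ hfu hfv hlt
      have hstep : ∀ θ, (j₁ : ℕ) * n + n - c ≤ θ → θ ≤ (j₁ : ℕ) * n + n →
          ∃ iq : Fin n₀, inS iq (θ - 1) ∧ inS iq θ := by
        intro θ hθ1 hθ2
        by_contra hno
        obtain ⟨a, b, haC, hbC, hadj, hQa, hQb⟩ := key
          (fun z => match z with | .inl t => (t : ℕ) ≤ (j₁ : ℕ) | .inr q => (q.2 : ℕ) < θ)
          u hu v hv (by rw [hfu]; try exact le_rfl)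
          (by rw [hfv]; exact fun h => absurd (h : (j₂ : ℕ) ≤ (j₁ : ℕ)) (by omega))
        rcases ha : f a with ta | ⟨ia, ka⟩ <;> rcases hb : f b with tb | ⟨ib, kb⟩
        · rw [ha, hb] at hadj; exact AG_adj_ll _ _ _ _ _ hadj
        · have hQa' : (ta : ℕ) ≤ (j₁ : ℕ) := by rw [ha] at hQa; exact hQa
          have hQb' : ¬ ((kb : ℕ) < θ) := by rw [hb] at hQb; exact hQb
          rw [ha, hb, AG_adj_lr] at hadj
          obtain ⟨hac, hac2⟩ := hAr _ hadj.2
          have heq := Nat.div_add_mod (kb : ℕ) n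
          rw [hadj.1] at heq
          have hmul : n * (ta : ℕ) ≤ n * (j₁ : ℕ) := Nat.mul_le_mul_left n hQa'
          have hcomm : n * (j₁ : ℕ) = (j₁ : ℕ) * n := mul_comm _ _
          omega
        · have hQa' : (ka : ℕ) < θ := by rw [ha] at hQa; exact hQa
          have hQb' : ¬ ((tb : ℕ) ≤ (j₁ : ℕ)) := by rw [hb] at hQb; exact hQb
          rw [ha, hb, AG_adj_rl] at hadj
          obtain ⟨hac, hac2⟩ := hAr _ hadj.2
          have heq := Nat.div_add_mod (ka : ℕ) n
          rw [hadj.1] at heq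
          have hmul : n * ((j₁ : ℕ) + 1) ≤ n * (tb : ℕ) := Nat.mul_le_mul_left n (by omega)
          have hcomm : n * (j₁ : ℕ) = (j₁ : ℕ) * n := mul_comm _ _
          have hd : n * ((j₁ : ℕ) + 1) = n * (j₁ : ℕ) + n := by ring
          omega
        · have hQa' : (ka : ℕ) < θ := by rw [ha] at hQa; exact hQa
          have hQb' : ¬ ((kb : ℕ) < θ) := by rw [hb] at hQb; exact hQb
          rw [ha, hb, AG_adj_rr] at hadj
          have hka : (ka : ℕ) = θ - 1 := by omega
          have hkb : (kb : ℕ) = θ := by omega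
          refine hno ⟨ia, ⟨a, haC, hka ▸ ka.2, ?_⟩, ⟨b, hbC, hkb ▸ kb.2, ?_⟩⟩
          · rw [ha]; exact congrArg Sum.inr (Prod.ext rfl (Fin.ext hka))
          · rw [hb, ← hadj.1]; exact congrArg Sum.inr (Prod.ext rfl (Fin.ext hkb))
      have hj₂n := j₂.2
      have hmul2 : n * ((j₁ : ℕ) + 2) ≤ n * n₀ := Nat.mul_le_mul_left n (by omega)
      have hcomm : n * (j₁ : ℕ) = (j₁ : ℕ) * n := mul_comm _ _
      have hcomm2 : n * n₀ = n₀ * n := mul_comm _ _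
      have hd2 : n * ((j₁ : ℕ) + 2) = n * (j₁ : ℕ) + 2 * n := by ring
      have hcount := card_le_of_rel
        (insert (n₀ * n + (j₁ : ℕ)) (insert (n₀ * n + (j₂ : ℕ))
          (Finset.Icc ((j₁ : ℕ) * n + n - c) ((j₁ : ℕ) * n + n))))
        (fun s z => z ∈ C ∧ ((∃ hs : s < n₀ * n, ∃ iq, f z = .inr (iq, ⟨s, hs⟩)) ∨
          (n₀ * n ≤ s ∧ ∃ hj : s - n₀ * n < n₀, f z = .inl ⟨s - n₀ * n, hj⟩)))
        (by
          intro s hs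
          rcases Finset.mem_insert.mp hs with rfl | hs'
          · refine ⟨u, hu, Or.inr ⟨by omega, by omega, ?_⟩⟩
            rw [hfu]
            exact congrArg Sum.inl
              (Fin.ext (show (j₁ : ℕ) = n₀ * n + (j₁ : ℕ) - n₀ * n by omega))
          rcases Finset.mem_insert.mp hs' with rfl | hs''
          · refine ⟨v, hv, Or.inr ⟨by omega, by omega, ?_⟩⟩
            rw [hfv]
            exact congrArg Sum.inl
              (Fin.ext (show (j₂ : ℕ) = n₀ * n + (j₂ : ℕ) - n₀ * n by omega))
          · rw [Finset.mem_Icc] at hs''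
            obtain ⟨iq, hS1, hS2⟩ := hstep s hs''.1 hs''.2
            obtain ⟨z, hz, hsn, hfz⟩ := hS2
            exact ⟨z, hz, Or.inl ⟨hsn, iq, hfz⟩⟩)
        (by
          rintro s hs s' hs' z ⟨hzC, h | h⟩ ⟨hzC', h' | h'⟩
          · obtain ⟨hsn, iq, hfz⟩ := h; obtain ⟨hsn', iq', hfz'⟩ := h'
            have := hfz.symm.trans hfz'
            simp only [Sum.inr.injEq, Prod.mk.injEq, Fin.mk.injEq] at this
            exact this.2
          · obtain ⟨hsn, iq, hfz⟩ := h; obtain ⟨hn', hj', hfz'⟩ := h'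
            exact absurd (hfz.symm.trans hfz') (by simp)
          · obtain ⟨hn', hj', hfz'⟩ := h; obtain ⟨hsn, iq, hfz⟩ := h'
            exact absurd (hfz.symm.trans hfz') (by simp)
          · obtain ⟨hn1, hj1, hfz1⟩ := h; obtain ⟨hn2, hj2, hfz2⟩ := h'
            have := hfz1.symm.trans hfz2
            simp only [Sum.inl.injEq, Fin.mk.injEq] at this
            omega)
      rw [Finset.card_insert_of_notMem, Finset.card_insert_of_notMem, Nat.card_Icc] at hcount
      · have hle := le_trans hcount hcard
        omega
      · rw [Finset.mem_Icc]
        omega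
      · simp only [Finset.mem_insert, Finset.mem_Icc]
        push_neg
        refine ⟨by omega, by omega⟩
    have claimA : ∀ v ∈ C, ∀ j', f v = .inl j' → j' = j := by
      intro v hv j' hfv'
      by_contra hne
      rcases Nat.lt_or_ge (j' : ℕ) (j : ℕ) with h | h
      · exact claimA0 v hv v₀ hv₀C j' j hfv' hfv₀ h
      · have hlt : (j : ℕ) < (j' : ℕ) := lt_of_le_of_ne h (fun hh => hne (Fin.ext hh.symm))
        exact claimA0 v₀ hv₀C v hv j j' hfv₀ hfv' hlt
    have claimC : ∀ v ∈ C, ∀ ip (k : Fin (n₀ * n)), f v = .inr (ip, k) →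
        (j : ℕ) * n ≤ (k : ℕ) ∧ (k : ℕ) < (j : ℕ) * n + n := by
      intro v hv ip k hk
      set Jp : ℕ → Prop :=
        fun t => ∀ s, min t (k : ℕ) ≤ s → s ≤ max t (k : ℕ) → inS ip s with hJpdef
      have hJstep : ∀ t t', Jp t → inS ip t' → (t + 1 = t' ∨ t' + 1 = t) → Jp t' := by
        intro t t' hJt hS hstep s hs1 hs2
        by_cases hst : s = t'
        · exact hst ▸ hS
        · exact hJt s (by omega) (by omega)
      have hJk : Jp (k : ℕ) := by
        intro s hs1 hs2
        have hs : s = (k : ℕ) := by omega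
        exact hs ▸ ⟨v, hv, k.2, by simp [hk]⟩
      have hex2 : ∃ t, Jp t ∧ t / n = (j : ℕ) ∧ t % n ∈ A := by
        by_contra hnex
        obtain ⟨a, b, haC, hbC, hadj, hQa, hQb⟩ := key
          (fun z => match z with | .inl _ => False | .inr q => q.1 = ip ∧ Jp (q.2 : ℕ))
          v hv v₀ hv₀C (by rw [hk]; exact ⟨rfl, hJk⟩) (by rw [hfv₀]; exact id)
        rcases ha : f a with ja | ⟨ia, ka⟩
        · rw [ha] at hQa; exact hQa
        · have hQa' : ia = ip ∧ Jp (ka : ℕ) := by rw [ha] at hQa; exact hQa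
          rcases hb : f b with jb | ⟨ib, kb⟩
          · have hjb : jb = j := claimA b hbC jb hb
            rw [ha, hb, AG_adj_rl] at hadj
            exact hnex ⟨(ka : ℕ), hQa'.2, by rw [hadj.1, hjb], hadj.2⟩
          · have hQb' : ¬ (ib = ip ∧ Jp (kb : ℕ)) := by rw [hb] at hQb; exact hQb
            rw [ha, hb, AG_adj_rr] at hadj
            have hib : ib = ip := hadj.1 ▸ hQa'.1
            have hSkb : inS ip (kb : ℕ) := ⟨b, hbC, kb.2, by rw [hb, hib]⟩
            exact hQb' ⟨hib, hJstep _ _ hQa'.2 hSkb hadj.2⟩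
      obtain ⟨t, hJt, htd, htm⟩ := hex2
      obtain ⟨htc, htc2⟩ := hAr _ htm
      have heq := Nat.div_add_mod t n
      rw [htd] at heq
      obtain ⟨vt, hvtC, htn, hfvt⟩ := hJt t (by omega) (by omega)
      have hcomm : n * (j : ℕ) = (j : ℕ) * n := mul_comm _ _
      have hcount := card_le_of_rel
        (insert (n₀ * n + (j : ℕ)) (Finset.Icc (min t (k : ℕ)) (max t (k : ℕ))))
        (fun s z => z ∈ C ∧ ((∃ hs : s < n₀ * n, f z = .inr (ip, ⟨s, hs⟩)) ∨
          (s = n₀ * n + (j : ℕ) ∧ f z = .inl j)))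
        (by
          intro s hs
          rcases Finset.mem_insert.mp hs with rfl | hs'
          · exact ⟨v₀, hv₀C, Or.inr ⟨rfl, hfv₀⟩⟩
          · rw [Finset.mem_Icc] at hs'
            obtain ⟨u, hu, hsn, hfu⟩ := hJt s hs'.1 hs'.2
            exact ⟨u, hu, Or.inl ⟨hsn, hfu⟩⟩)
        (by
          rintro s hs s' hs' z ⟨hzC, h | h⟩ ⟨hzC', h' | h'⟩
          · obtain ⟨hsn, hfz⟩ := h; obtain ⟨hsn', hfz'⟩ := h'
            have := hfz.symm.trans hfz'
            simp only [Sum.inr.injEq, Prod.mk.injEq, Fin.mk.injEq] at this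
            exact this.2
          · exact absurd (h.2.symm.trans h'.2) (by simp)
          · exact absurd (h.2.symm.trans h'.2) (by simp)
          · rw [h.1, h'.1])
      rw [Finset.card_insert_of_notMem, Nat.card_Icc] at hcount
      · have hle := le_trans hcount hcard
        omega
      · rw [Finset.mem_Icc]
        have hkn := k.2
        omega
    refine ⟨fun v => Sum.elim (fun _ => x)
      (fun p => (P (Fin.castLE hn₀m p.1)).get ⟨(p.2 : ℕ) % n, hget _ _⟩) (f v.1), ?_, ?_⟩
    · intro v v' hgeq
      rcases h1 : f v.1 with j₁ | ⟨i₁, k₁⟩ <;> rcases h2 : f v'.1 with j₂ | ⟨i₂, k₂⟩ <;>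
        simp only [h1, h2, Sum.elim_inl, Sum.elim_inr] at hgeq
      · have h12 := (claimA v.1 v.2 j₁ h1).trans (claimA v'.1 v'.2 j₂ h2).symm
        exact Subtype.ext (hfinj (by rw [h1, h2, h12]))
      · exact absurd (hgeq ▸ List.get_mem _ _) (hP _).2.2
      · exact absurd (hgeq.symm ▸ List.get_mem _ _) (hP _).2.2
      · by_cases hii : i₁ = i₂
        · subst hii
          have hkk : ((k₁ : ℕ) % n) = ((k₂ : ℕ) % n) := by
            have := ((hP (Fin.castLE hn₀m i₁)).2.1.2.1.get_inj_iff).mp hgeq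
            exact congrArg Fin.val this
          obtain ⟨hb1, hb2⟩ := claimC v.1 v.2 i₁ k₁ h1
          obtain ⟨hb3, hb4⟩ := claimC v'.1 v'.2 i₁ k₂ h2
          have e1 := (div_block hn0 hb1 hb2).2
          have e2 := (div_block hn0 hb3 hb4).2
          have : (k₁ : ℕ) = (k₂ : ℕ) := by omega
          exact Subtype.ext (hfinj (by rw [h1, h2]; congr 2; exact Fin.ext this))
        · exfalso
          have hne : Fin.castLE hn₀m i₁ ≠ Fin.castLE hn₀m i₂ :=
            fun h => hii (Fin.castLE_injective hn₀m h)
          exact (hPP _ _ hne _ (List.get_mem _ _) _ (List.get_mem _ _)).1 hgeq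
    · intro a b
      have hiff : ((H i).induce C).Adj a b ↔ (H i).Adj a.1 b.1 := Iff.rfl
      rw [hiff, hfadj a.1 b.1]
      rcases h1 : f a.1 with j₁ | ⟨i₁, k₁⟩ <;> rcases h2 : f b.1 with j₂ | ⟨i₂, k₂⟩ <;>
        simp only [h1, h2, Sum.elim_inl, Sum.elim_inr]
      · exact iff_of_false (AG_adj_ll _ _ _ _ _) (T.loopless.irrefl x)
      · have hj₁ : j₁ = j := claimA a.1 a.2 j₁ h1
        obtain ⟨hb1, hb2⟩ := claimC b.1 b.2 i₂ k₂ h2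
        rw [AG_adj_lr, (div_block hn0 hb1 hb2).1, hj₁]
        rw [hPx (Fin.castLE hn₀m i₂) ⟨(k₂ : ℕ) % n, hget _ _⟩]
        simp
      · have hj₂ : j₂ = j := claimA b.1 b.2 j₂ h2
        obtain ⟨hb1, hb2⟩ := claimC a.1 a.2 i₁ k₁ h1
        rw [AG_adj_rl, (div_block hn0 hb1 hb2).1, hj₂]
        rw [SimpleGraph.adj_comm, hPx (Fin.castLE hn₀m i₁) ⟨(k₁ : ℕ) % n, hget _ _⟩]
        simp
      · rw [AG_adj_rr]
        by_cases hii : i₁ = i₂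
        · subst hii
          obtain ⟨hb1, hb2⟩ := claimC a.1 a.2 i₁ k₁ h1
          obtain ⟨hb3, hb4⟩ := claimC b.1 b.2 i₁ k₂ h2
          have e1 := (div_block hn0 hb1 hb2).2
          have e2 := (div_block hn0 hb3 hb4).2
          rw [(hP (Fin.castLE hn₀m i₁)).2.1.2.2 ⟨(k₁ : ℕ) % n, hget _ _⟩ ⟨(k₂ : ℕ) % n, hget _ _⟩]
          simp only [eq_self_iff_true, true_and]
          constructor <;> intro h <;> omega
        · refine iff_of_false ?_ ?_
          · rintro ⟨h, -⟩; exact hii h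
          · have hne : Fin.castLE hn₀m i₁ ≠ Fin.castLE hn₀m i₂ :=
              fun h => hii (Fin.castLE_injective hn₀m h)
            exact (hPP _ _ hne _ (List.get_mem _ _) _ (List.get_mem _ _)).2
  · push_neg at hneck
    rcases hw0 : f w with j₀ | ⟨i₀, k₀⟩
    · exact absurd hw0 (hneck w hwC j₀)
    have claimP : ∀ v ∈ C, ∀ ip (k : Fin (n₀ * n)), f v = .inr (ip, k) → ip = i₀ := by
      intro v hv ip k hk
      by_contra hne
      obtain ⟨a, b, haC, hbC, hadj, hQa, hQb⟩ := key
        (fun z => match z with | .inl _ => False | .inr q => q.1 = ip) v hv w hwC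
        (by rw [hk]) (by rw [hw0]; exact fun h => hne (h ▸ rfl))
      rcases ha : f a with ja | ⟨ia, ka⟩
      · rw [ha] at hQa; exact hQa
      · have hQa' : ia = ip := by rw [ha] at hQa; exact hQa
        rcases hb : f b with jb | ⟨ib, kb⟩
        · exact hneck b hbC jb hb
        · have hQb' : ¬ (ib = ip) := by rw [hb] at hQb; exact hQb
          rw [ha, hb, AG_adj_rr] at hadj
          exact hQb' (hadj.1 ▸ hQa')
    have claimJ : ∀ v ∈ C, ∀ k : Fin (n₀ * n), f v = .inr (i₀, k) →
        ∀ s, min (k : ℕ) (k₀ : ℕ) ≤ s → s ≤ max (k : ℕ) (k₀ : ℕ) → inS i₀ s := by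
      intro v hv k hk
      set Jp : ℕ → Prop :=
        fun t => ∀ s, min t (k₀ : ℕ) ≤ s → s ≤ max t (k₀ : ℕ) → inS i₀ s with hJpdef
      have hJstep : ∀ t t', Jp t → inS i₀ t' → (t + 1 = t' ∨ t' + 1 = t) → Jp t' := by
        intro t t' hJt hS hstep s hs1 hs2
        by_cases hst : s = t'
        · exact hst ▸ hS
        · exact hJt s (by omega) (by omega)
      have hJk₀ : Jp (k₀ : ℕ) := by
        intro s hs1 hs2
        have hs : s = (k₀ : ℕ) := by omega
        exact hs ▸ ⟨w, hwC, k₀.2, by simp [hw0]⟩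
      suffices hJ : Jp (k : ℕ) by
        intro s h1 h2
        exact hJ s (by omega) (by omega)
      by_contra hnJ
      obtain ⟨a, b, haC, hbC, hadj, hQa, hQb⟩ := key
        (fun z => match z with | .inl _ => False | .inr q => q.1 = i₀ ∧ Jp (q.2 : ℕ)) w hwC v hv
        (by rw [hw0]; exact ⟨rfl, hJk₀⟩) (by rw [hk]; exact fun h => hnJ h.2)
      rcases ha : f a with ja | ⟨ia, ka⟩
      · rw [ha] at hQa; exact hQa
      · have hQa' : ia = i₀ ∧ Jp (ka : ℕ) := by rw [ha] at hQa; exact hQa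
        rcases hb : f b with jb | ⟨ib, kb⟩
        · exact hneck b hbC jb hb
        · have hQb' : ¬ (ib = i₀ ∧ Jp (kb : ℕ)) := by rw [hb] at hQb; exact hQb
          rw [ha, hb, AG_adj_rr] at hadj
          have hib : ib = i₀ := hadj.1 ▸ hQa'.1
          have hSkb : inS i₀ (kb : ℕ) := ⟨b, hbC, kb.2, by rw [hb, hib]⟩
          exact hQb' ⟨hib, hJstep _ _ hQa'.2 hSkb hadj.2⟩
    have claimD : ∀ v ∈ C, ∀ k : Fin (n₀ * n), f v = .inr (i₀, k) →
        (k : ℕ) ≤ (k₀ : ℕ) + (c - 1) ∧ (k₀ : ℕ) ≤ (k : ℕ) + (c - 1) := by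
      intro v hv k hk
      have hJ := claimJ v hv k hk
      have hcount := card_le_of_rel (Finset.Icc (min (k : ℕ) (k₀ : ℕ)) (max (k : ℕ) (k₀ : ℕ)))
        (fun s u => u ∈ C ∧ ∃ hs : s < n₀ * n, f u = .inr (i₀, ⟨s, hs⟩))
        (by
          intro s hs
          rw [Finset.mem_Icc] at hs
          obtain ⟨u, hu, hsn, hfu⟩ := hJ s hs.1 hs.2
          exact ⟨u, hu, hsn, hfu⟩)
        (by
          rintro t ht t' ht' u ⟨huC, hs, hfu⟩ ⟨huC', hs', hfu'⟩
          have := hfu.symm.trans hfu'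
          simp only [Sum.inr.injEq, Prod.mk.injEq, Fin.mk.injEq] at this
          exact this.2)
      rw [Nat.card_Icc] at hcount
      have := le_trans hcount hcard
      omega
    have hex0 : ∃ t, inS i₀ t := ⟨(k₀ : ℕ), w, hwC, k₀.2, by simp [hw0]⟩
    set kmin := Nat.find hex0 with hkmindef
    have hkminS : inS i₀ kmin := Nat.find_spec hex0
    have hkminle : ∀ t, inS i₀ t → kmin ≤ t := fun t ht => Nat.find_min' hex0 ht
    have hbound : ∀ v ∈ C, ∀ k : Fin (n₀ * n), f v = .inr (i₀, k) →
        kmin ≤ (k : ℕ) ∧ (k : ℕ) - kmin < n := by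
      intro v hv k hk
      obtain ⟨vm, hvmC, htm, hfvm⟩ := hkminS
      have h1 := claimD v hv k hk
      have h2 := claimD vm hvmC ⟨kmin, htm⟩ hfvm
      have h2' : kmin ≤ (k₀ : ℕ) + (c - 1) ∧ (k₀ : ℕ) ≤ kmin + (c - 1) := h2
      have h3 := hkminle (k : ℕ) ⟨v, hv, k.2, by simp [hk]⟩
      omega
    have hm0 : 0 < m := lt_of_lt_of_le hc1 hcm
    refine ⟨fun v => Sum.elim (fun _ => x)
      (fun p => (P ⟨0, hm0⟩).get ⟨((p.2 : ℕ) - kmin) % n, hget _ _⟩) (f v.1), ?_, ?_⟩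
    · intro v v' hgeq
      rcases h1 : f v.1 with j₁ | ⟨i₁, k₁⟩
      · exact absurd h1 (hneck v.1 v.2 j₁)
      rcases h2 : f v'.1 with j₂ | ⟨i₂, k₂⟩
      · exact absurd h2 (hneck v'.1 v'.2 j₂)
      simp only [h1, h2, Sum.elim_inr] at hgeq
      have hi₁ : i₁ = i₀ := claimP v.1 v.2 i₁ k₁ h1
      have hi₂ : i₂ = i₀ := claimP v'.1 v'.2 i₂ k₂ h2
      subst hi₁; subst hi₂
      have hkk : (((k₁ : ℕ) - kmin) % n) = (((k₂ : ℕ) - kmin) % n) := by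
        have := ((hP ⟨0, hm0⟩).2.1.2.1.get_inj_iff).mp hgeq
        exact congrArg Fin.val this
      obtain ⟨hb1, hb2⟩ := hbound v.1 v.2 k₁ h1
      obtain ⟨hb3, hb4⟩ := hbound v'.1 v'.2 k₂ h2
      rw [Nat.mod_eq_of_lt hb2, Nat.mod_eq_of_lt hb4] at hkk
      have : (k₁ : ℕ) = (k₂ : ℕ) := by omega
      exact Subtype.ext (hfinj (by rw [h1, h2]; congr 2; exact Fin.ext this))
    · intro a b
      have hiff : ((H i).induce C).Adj a b ↔ (H i).Adj a.1 b.1 := Iff.rfl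
      rw [hiff, hfadj a.1 b.1]
      rcases h1 : f a.1 with j₁ | ⟨i₁, k₁⟩
      · exact absurd h1 (hneck a.1 a.2 j₁)
      rcases h2 : f b.1 with j₂ | ⟨i₂, k₂⟩
      · exact absurd h2 (hneck b.1 b.2 j₂)
      simp only [h1, h2, Sum.elim_inl, Sum.elim_inr]
      have hi₁ : i₁ = i₀ := claimP a.1 a.2 i₁ k₁ h1
      have hi₂ : i₂ = i₀ := claimP b.1 b.2 i₂ k₂ h2
      subst hi₁; subst hi₂
      rw [AG_adj_rr]
      obtain ⟨hb1, hb2⟩ := hbound a.1 a.2 k₁ h1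
      obtain ⟨hb3, hb4⟩ := hbound b.1 b.2 k₂ h2
      rw [(hP ⟨0, hm0⟩).2.1.2.2 ⟨((k₁ : ℕ) - kmin) % n, hget _ _⟩
        ⟨((k₂ : ℕ) - kmin) % n, hget _ _⟩]
      simp only [Nat.mod_eq_of_lt hb2, Nat.mod_eq_of_lt hb4, eq_self_iff_true, true_and]
      constructor <;> intro h <;> omega
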